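/- Let Y = {e, f, g} be the three-element semilattice in which e and f are incomparable and ef = fe = eg = ge = fg = gf = g. Then the element ē·f̄ of IG(Y) is not a regular element (there is no w ∈ IG(Y) with ēf̄ · w · ēf̄ = ēf̄); in particular IG(Y) is not a regular semigroup. -/

import Mathlib

/-! Common definitions: free idempotent generated semigroups over bands,
generalised Green's relations, and abundancy notions. -/

/-- `(e, f)` is a *basic pair* if `ef ∈ {e,f}` or `fe ∈ {e,f}`. -/
def basicPair {B : Type*} [Mul B] (e f : B) : Prop :=
  e * f = e ∨ e * f = f ∨ f * e = e ∨ f * e = f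

/-- The defining congruence of the free idempotent generated semigroup `IG B`:
the congruence on the free semigroup on `{ē : e ∈ B}` generated by the relations
`ē f̄ = (ef)‾` for basic pairs `(e, f)`. -/
def igCon (B : Type*) [Semigroup B] : Con (FreeSemigroup B) :=
  conGen fun w₁ w₂ => ∃ e f : B, basicPair e f ∧
    w₁ = FreeSemigroup.of e * FreeSemigroup.of f ∧ w₂ = FreeSemigroup.of (e * f)

/-- The free idempotent generated semigroup over a band `B`. -/
abbrev IG (B : Type*) [Semigroup B] := (igCon B).Quotient

/-- The canonical generator `ē` of `IG B`. -/
def igOf {B : Type*} [Semigroup B] (e : B) : IG B :=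
  ((FreeSemigroup.of e : FreeSemigroup B) : (igCon B).Quotient)

/-- `prodSeq x a b = x a * x (a+1) * ⋯ * x b` (it is `x a` when `b ≤ a`). -/
def prodSeq {M : Type*} [Mul M] (x : ℕ → M) (a b : ℕ) : M :=
  (List.range (b - a)).foldl (fun acc i => acc * x (a + i + 1)) (x a)

/-- The word `x̄_a x̄_{a+1} ⋯ x̄_b` in the free semigroup on `{ē : e ∈ B}`. -/
def freeWord {B : Type*} (x : ℕ → B) (a b : ℕ) : FreeSemigroup B :=
  prodSeq (fun i => FreeSemigroup.of (x i)) a b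

/-- The element `x̄_a x̄_{a+1} ⋯ x̄_b` of `IG B`. -/
def igWord {B : Type*} [Semigroup B] (x : ℕ → B) (a b : ℕ) : IG B :=
  ((freeWord x a b : FreeSemigroup B) : (igCon B).Quotient)

/-- Green's relation `𝓡`: `a 𝓡 b` iff `a = b` or `as = b`, `bt = a` for some `s, t`. -/
def GreenR {S : Type*} [Semigroup S] (a b : S) : Prop :=
  a = b ∨ ∃ s t : S, a * s = b ∧ b * t = a

/-- Green's relation `𝓛`: `a 𝓛 b` iff `a = b` or `sa = b`, `tb = a` for some `s, t`. -/
def GreenL {S : Type*} [Semigroup S] (a b : S) : Prop :=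
  a = b ∨ ∃ s t : S, s * a = b ∧ t * b = a

/-- `a 𝓡* b` iff for all `x, y ∈ S¹`, `xa = ya ↔ xb = yb`. -/
def RStar {S : Type*} [Semigroup S] (a b : S) : Prop :=
  ∀ x y : WithOne S,
    x * (a : WithOne S) = y * (a : WithOne S) ↔ x * (b : WithOne S) = y * (b : WithOne S)

/-- `a 𝓛* b` iff for all `x, y ∈ S¹`, `ax = ay ↔ bx = by`. -/
def LStar {S : Type*} [Semigroup S] (a b : S) : Prop :=
  ∀ x y : WithOne S,
    (a : WithOne S) * x = (a : WithOne S) * y ↔ (b : WithOne S) * x = (b : WithOne S) * y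

/-- `a 𝓡̃ b` iff for every idempotent `e`, `ea = a ↔ eb = b`. -/
def RTilde {S : Type*} [Semigroup S] (a b : S) : Prop :=
  ∀ e : S, IsIdempotentElem e → (e * a = a ↔ e * b = b)

/-- `a 𝓛̃ b` iff for every idempotent `e`, `ae = a ↔ be = b`. -/
def LTilde {S : Type*} [Semigroup S] (a b : S) : Prop :=
  ∀ e : S, IsIdempotentElem e → (a * e = a ↔ b * e = b)

/-- A semigroup is *abundant* if every `𝓡*`-class and every `𝓛*`-class
contains an idempotent. -/
def Abundant (S : Type*) [Semigroup S] : Prop :=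
  ∀ a : S, (∃ e : S, IsIdempotentElem e ∧ RStar a e) ∧
    (∃ e : S, IsIdempotentElem e ∧ LStar a e)

/-- A semigroup is *weakly abundant* if every `𝓡̃`-class and every `𝓛̃`-class
contains an idempotent. -/
def WeaklyAbundant (S : Type*) [Semigroup S] : Prop :=
  ∀ a : S, (∃ e : S, IsIdempotentElem e ∧ RTilde a e) ∧
    (∃ e : S, IsIdempotentElem e ∧ LTilde a e)

/-- On a band, `x` and `y` are `𝒟`-equivalent iff `xyx = x` and `yxy = y`. -/
def dEquiv {B : Type*} [Mul B] (x y : B) : Prop :=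
  x * y * x = x ∧ y * x * y = y

/-- On a band, `x` and `y` are `𝒥`-incomparable iff `xyx ≠ x` and `yxy ≠ y`. -/
def jIncomp {B : Type*} [Mul B] (x y : B) : Prop :=
  x * y * x ≠ x ∧ y * x * y ≠ y

/-- One step of the reduction system induced by the presentation of `IG B`:
replace a factor `ē f̄`, with `(e,f)` a basic pair, by `(ef)‾`. -/
def RedStep {B : Type*} [Semigroup B] (w w' : FreeSemigroup B) : Prop :=
  ∃ (p q : List B) (e f : B), basicPair e f ∧
    w.head :: w.tail = p ++ e :: f :: q ∧
    w'.head :: w'.tail = p ++ (e * f) :: q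

/-- A word is in *normal form* (irreducible) if no reduction step applies. -/
def IsNF {B : Type*} [Semigroup B] (w : FreeSemigroup B) : Prop :=
  ∀ w', ¬ RedStep w w'

/-- `x̄₁ ⋯ x̄ₙ` (letters `x 1, …, x n`) is in *almost normal form* witnessed by
block boundaries `idx 0 = 0 < idx 1 < ⋯ < idx r = n`: within each block all
letters are `𝒟`-equivalent, and letters in adjacent blocks are incomparable. -/
def AlmostNF {B : Type*} [Mul B] (x : ℕ → B) (n r : ℕ) (idx : ℕ → ℕ) : Prop :=
  1 ≤ r ∧ idx 0 = 0 ∧ idx r = n ∧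
  (∀ k < r, idx k < idx (k + 1)) ∧
  (∀ k < r, ∀ p q : ℕ, idx k < p → p ≤ idx (k + 1) → idx k < q → q ≤ idx (k + 1) →
    dEquiv (x p) (x q)) ∧
  (∀ k : ℕ, k + 1 < r → ∀ p q : ℕ, idx k < p → p ≤ idx (k + 1) →
    idx (k + 1) < q → q ≤ idx (k + 2) → jIncomp (x p) (x q))

/-- Condition (P) for `IG B`. -/
def CondP (B : Type*) [Semigroup B] : Prop :=
  ∀ (n m r : ℕ) (u v : ℕ → B) (iu iv : ℕ → ℕ),
    AlmostNF u n r iu → AlmostNF v m r iv →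
    igWord u 1 n = igWord v 1 m →
    ((∀ s : ℕ, 1 ≤ s → s ≤ r →
        (u (iu s) * v (iv s) = u (iu s) ∧ v (iv s) * u (iu s) = v (iv s)) →
        igWord u 1 (iu s) = igWord v 1 (iv s)) ∧
      (∀ t : ℕ, t + 1 ≤ r →
        (u (iu t + 1) * v (iv t + 1) = v (iv t + 1) ∧
          v (iv t + 1) * u (iu t + 1) = u (iu t + 1)) →
        igWord u (iu t + 1) n = igWord v (iv t + 1) m))

/-- A normal band is *pliant* if for every `𝒟`-class `D` there is `c ∈ D` with
`u e u = c` for every `e ∈ D` and every `u` strictly `𝒥`-above `D`. -/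
def Pliant (B : Type*) [Mul B] : Prop :=
  ∀ d : B, ∃ c : B, dEquiv c d ∧
    ∀ e u : B, dEquiv e d → (e * u * e = e ∧ u * e * u ≠ u) → u * e * u = c

/-- Auxiliary model semigroup -/
inductive TT where
  | zero : TT
  | word : Bool → Bool → ℕ → TT
deriving DecidableEq

def TT.mul : TT → TT → TT
  | .zero, _ => .zero
  | .word _ _ _, .zero => .zero
  | .word a b k, .word c d m => .word a d (min (k + m + (if b = c then 0 else 1)) 2)

instance : Mul TT := ⟨TT.mul⟩

lemma TT.mul_def (a b : Bool) (k : ℕ) (c d : Bool) (m : ℕ) :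
    TT.word a b k * TT.word c d m = TT.word a d (min (k + m + (if b = c then 0 else 1)) 2) := rfl

lemma TT.zero_mul' (x : TT) : TT.zero * x = TT.zero := rfl
lemma TT.mul_zero' (x : TT) : x * TT.zero = TT.zero := by cases x <;> rfl

instance : Semigroup TT where
  mul_assoc x y z := by
    cases x with
    | zero => simp [TT.zero_mul']
    | word a b k =>
      cases y with
      | zero => simp [TT.zero_mul', TT.mul_zero']
      | word c d m =>
        cases z with
        | zero => simp [TT.zero_mul', TT.mul_zero']
        | word p q n =>
          simp only [TT.mul_def]
          congr 1
          split_ifs <;> omega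

def kerCon {B S : Type*} [Semigroup B] [Semigroup S] (φ : FreeSemigroup B →ₙ* S) :
    Con (FreeSemigroup B) where
  r u v := φ u = φ v
  iseqv := ⟨fun _ => rfl, Eq.symm, Eq.trans⟩
  mul' {w x y z} h1 h2 := by
    have h1' : φ w = φ x := h1
    have h2' : φ y = φ z := h2
    show φ (w * y) = φ (x * z)
    rw [map_mul, map_mul, h1', h2']

lemma igCon_le_kerCon {B S : Type*} [Semigroup B] [Semigroup S] (φ : B → S)
    (h : ∀ a b : B, basicPair a b → φ a * φ b = φ (a * b)) :
    igCon B ≤ kerCon (FreeSemigroup.lift φ) := by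
  apply Con.conGen_le.mpr
  rintro u v ⟨a, b, hb, rfl, rfl⟩
  show (FreeSemigroup.lift φ) _ = (FreeSemigroup.lift φ) _
  simp only [map_mul, FreeSemigroup.lift_of]
  exact h a b hb

def igLift {B S : Type*} [Semigroup B] [Semigroup S] (φ : B → S)
    (h : ∀ a b : B, basicPair a b → φ a * φ b = φ (a * b)) : IG B → S :=
  Quotient.lift (FreeSemigroup.lift φ) (fun _ _ huv => igCon_le_kerCon φ h huv)

lemma igLift_coe {B S : Type*} [Semigroup B] [Semigroup S] (φ : B → S)
    (h : ∀ a b : B, basicPair a b → φ a * φ b = φ (a * b)) (u : FreeSemigroup B) :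
    igLift φ h (u : IG B) = FreeSemigroup.lift φ u := rfl

/-- For the three element semilattice `Y = {e, f, g}` with
`e, f` incomparable and all other products equal to `g`, the element `ē f̄` of
`IG Y` is not regular; in particular `IG Y` is not a regular semigroup. -/
theorem IG_three_element_semilattice_not_regular
    {Y : Type*} [Semigroup Y] (hcomm : ∀ a b : Y, a * b = b * a)
    (hidem : ∀ a : Y, a * a = a)
    (e f g : Y) (hall : ∀ z : Y, z = e ∨ z = f ∨ z = g)
    (hef : e ≠ f) (heg : e ≠ g) (hfg : f ≠ g)
    (hmul_ef : e * f = g) (hmul_eg : e * g = g) (hmul_fg : f * g = g) :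
    (¬ ∃ w : IG Y, (igOf e * igOf f) * w * (igOf e * igOf f) = igOf e * igOf f) ∧
      ¬ (∀ a : IG Y, ∃ w : IG Y, a * w * a = a) := by
  classical
  have hfe : f * e = g := (hcomm f e).trans hmul_ef
  have hge : g * e = g := (hcomm g e).trans hmul_eg
  have hgf : g * f = g := (hcomm g f).trans hmul_fg
  set φ0 : Y → TT := fun z =>
    if z = e then TT.word true true 0 else if z = f then TT.word false false 0 else TT.zero
    with hφ0
  have hpe : φ0 e = TT.word true true 0 := by simp [hφ0]
  have hpf : φ0 f = TT.word false false 0 := by simp [hφ0, Ne.symm hef]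
  have hpg : φ0 g = TT.zero := by simp [hφ0, Ne.symm heg, Ne.symm hfg]
  have hbase : ∀ a b : Y, basicPair a b → φ0 a * φ0 b = φ0 (a * b) := by
    intro a b hb
    rcases hall a with rfl | rfl | rfl <;> rcases hall b with rfl | rfl | rfl
    · rw [hidem, hpe]; decide
    · exfalso
      rcases hb with h | h | h | h
      · rw [hmul_ef] at h; exact heg h.symm
      · rw [hmul_ef] at h; exact hfg h.symm
      · rw [hfe] at h; exact heg h.symm
      · rw [hfe] at h; exact hfg h.symm
    · rw [hmul_eg, hpe, hpg]; decide
    · exfalso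
      rcases hb with h | h | h | h
      · rw [hfe] at h; exact hfg h.symm
      · rw [hfe] at h; exact heg h.symm
      · rw [hmul_ef] at h; exact hfg h.symm
      · rw [hmul_ef] at h; exact heg h.symm
    · rw [hidem, hpf]; decide
    · rw [hmul_fg, hpf, hpg]; decide
    · rw [hge, hpe, hpg]; decide
    · rw [hgf, hpf, hpg]; decide
    · rw [hidem _, hpg]; decide
  have key : ¬ ∃ w : IG Y, (igOf e * igOf f) * w * (igOf e * igOf f) = igOf e * igOf f := by
    rintro ⟨w, hw⟩
    obtain ⟨u, rfl⟩ := @Quotient.exists_rep _ (igCon Y).toSetoid w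
    have this : (FreeSemigroup.lift φ0)
          (FreeSemigroup.of e * FreeSemigroup.of f * u *
            (FreeSemigroup.of e * FreeSemigroup.of f)) =
        (FreeSemigroup.lift φ0) (FreeSemigroup.of e * FreeSemigroup.of f) :=
      congrArg (igLift φ0 hbase) hw
    simp only [map_mul, FreeSemigroup.lift_of, hpe, hpf] at this
    rcases hu : (FreeSemigroup.lift φ0) u with _ | ⟨c, d, m⟩ <;> rw [hu] at this
    · rw [show TT.word true true 0 * TT.word false false 0 = TT.word true false 1 from rfl,
        TT.mul_zero', TT.zero_mul'] at this
      exact TT.noConfusion this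
    · rw [show TT.word true true 0 * TT.word false false 0 = TT.word true false 1 from rfl,
        TT.mul_def, TT.mul_def] at this
      have h2 := TT.word.injEq _ _ _ _ _ _ ▸ this
      injection this with _ _ hlen
      split_ifs at hlen <;> omega
  exact ⟨key, fun h => key ⟨_, (h (igOf e * igOf f)).choose_spec⟩⟩
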